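/- For every prime p ≥ 3, the bidirected complete graph K*_p has a Hamiltonian decomposition that is not nomadic. Specifically: (1) for each nonzero l ∈ ZMod p, the nomad g_l(t) = t·l traces a Hamiltonian cycle (g_l(t+p) = g_l(t) for all t and g_l is injective on {0,…,p−1}), and every ordered pair (u,v) of distinct elements of ZMod p occurs exactly once among the pairs (g_l(t), g_l(t+1)) with l nonzero and 0 ≤ t ≤ p−1; and (2) for every choice of starting vertices, i.e., every function v assigning to each nonzero l ∈ ZMod p an element v(l) ∈ ZMod p, there exist distinct nonzero l, l' ∈ ZMod p and a natural number t such that v(l) + t·l = v(l') + t·l'. -/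

import Mathlib

/-- For every prime `p ≥ 3`, the decomposition of `K*_p` into the `p-1` constant-length
Hamiltonian cycles `g_l(t) = t·l` (`l ≠ 0`) is a Hamiltonian decomposition that is not
nomadic: (1) each `g_l` traces a Hamiltonian cycle and every ordered pair of distinct
vertices occurs exactly once as a consecutive pair; (2) for every choice of starting
vertices, some two nomads collide. -/
theorem prime_constant_length_decomposition_not_nomadic (p : ℕ) (hp : p.Prime) (hp3 : 3 ≤ p) :
    -- (1a) each g_l traces a Hamiltonian cycle
    (∀ l : ZMod p, l ≠ 0 →
      (∀ t : ℕ, ((t + p : ℕ) : ZMod p) * l = ((t : ℕ) : ZMod p) * l) ∧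
      (∀ t₁ t₂ : ℕ, t₁ < p → t₂ < p →
        ((t₁ : ℕ) : ZMod p) * l = ((t₂ : ℕ) : ZMod p) * l → t₁ = t₂)) ∧
    -- (1b) every ordered pair of distinct vertices occurs exactly once as a consecutive pair
    (∀ u v : ZMod p, u ≠ v →
      ∃! x : {l : ZMod p // l ≠ 0} × Fin p,
        ((x.2 : ℕ) : ZMod p) * (x.1 : ZMod p) = u ∧
        (((x.2 : ℕ) + 1 : ℕ) : ZMod p) * (x.1 : ZMod p) = v) ∧
    -- (2) for every choice of starting vertices, some two nomads collide
    (∀ v : {l : ZMod p // l ≠ 0} → ZMod p,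
      ∃ l l' : {l : ZMod p // l ≠ 0}, l ≠ l' ∧
        ∃ t : ℕ, v l + (t : ZMod p) * (l : ZMod p) = v l' + (t : ZMod p) * (l' : ZMod p)) := by
  haveI : Fact p.Prime := ⟨hp⟩
  haveI : NeZero p := ⟨hp.ne_zero⟩
  refine ⟨?_, ?_, ?_⟩
  · intro l hl
    constructor
    · intro t; push_cast; simp [ZMod.natCast_self]
    · intro t₁ t₂ h1 h2 h
      have := mul_right_cancel₀ hl h
      have := (ZMod.natCast_eq_natCast_iff' t₁ t₂ p).mp this
      rwa [Nat.mod_eq_of_lt h1, Nat.mod_eq_of_lt h2] at this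
  · intro u v huv
    have hl : v - u ≠ 0 := sub_ne_zero.mpr (Ne.symm huv)
    refine ⟨⟨⟨v - u, hl⟩, ⟨(u * (v - u)⁻¹).val, ZMod.val_lt _⟩⟩, ?_, ?_⟩
    · constructor
      · simp only [ZMod.natCast_val, ZMod.cast_id]
        field_simp
      · push_cast
        simp only [ZMod.natCast_val, ZMod.cast_id]
        field_simp
        ring
    · rintro ⟨⟨l, hl'⟩, t⟩ ⟨h1, h2⟩
      push_cast at h2
      have hleq : l = v - u := by
        have : ((t : ℕ) : ZMod p) * l + l = v := by rw [← h2]; ring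
        rw [h1] at this; linear_combination this
      have hteq : ((t : ℕ) : ZMod p) = u * (v - u)⁻¹ := by
        subst hleq
        field_simp at h1 ⊢
        linear_combination h1
      have : (t : ℕ) = (u * (v - u)⁻¹).val := by
        have := congrArg ZMod.val hteq
        rwa [ZMod.val_natCast, Nat.mod_eq_of_lt t.isLt] at this
      simp only [Prod.mk.injEq, Subtype.mk.injEq]
      exact ⟨hleq, Fin.ext this⟩
  · intro v
    have h1 : (1 : ZMod p) ≠ 0 := one_ne_zero
    have h2 : (2 : ZMod p) ≠ 0 := by
      have : ((2 : ℕ) : ZMod p) ≠ 0 := by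
        rw [Ne, ZMod.natCast_eq_zero_iff]
        intro h
        exact absurd (Nat.le_of_dvd two_pos h) (by omega)
      simpa using this
    have h12 : (1 : ZMod p) ≠ 2 := by
      intro h
      have : (1 : ZMod p) - 2 = 0 := by rw [h]; ring
      have : (-1 : ZMod p) = 0 := by linear_combination this
      simp at this
    refine ⟨⟨1, h1⟩, ⟨2, h2⟩, by simp [h12, Subtype.ext_iff], ?_⟩
    refine ⟨(v ⟨1, h1⟩ - v ⟨2, h2⟩).val, ?_⟩
    simp only [ZMod.natCast_val, ZMod.cast_id]
    ring
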